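/- Let θ ∈ (0, π] and s ≥ 0. If tan(w) = sin(θ/2)·sinh(s) / (1 + cos(θ/2)·cosh(s)) with w ∈ [0, π/2), then tan(w/2) = tan(θ/4)·tanh(s/2). -/

import Mathlib

open Real

theorem tan_half_gap_cone_point (θ s w : ℝ)
    (hθ : θ ∈ Set.Ioc 0 π) (hs : 0 ≤ s) (hw : w ∈ Set.Ico 0 (π/2))
    (htan : Real.tan w = Real.sin (θ/2) * Real.sinh s /
      (1 + Real.cos (θ/2) * Real.cosh s)) :
    Real.tan (w / 2) = Real.tan (θ/4) * Real.tanh (s/2) := by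
  obtain ⟨hθ0, hθπ⟩ := hθ
  obtain ⟨hw0, hwπ⟩ := hw
  have hπ := Real.pi_pos
  have hc : 0 < Real.cos (θ/4) := by
    apply Real.cos_pos_of_mem_Ioo
    constructor <;> nlinarith
  have hsn : 0 < Real.sin (θ/4) := Real.sin_pos_of_pos_of_lt_pi (by linarith) (by nlinarith)
  have hch : 0 < Real.cosh (s/2) := Real.cosh_pos _
  have hsh : 0 ≤ Real.sinh (s/2) := Real.sinh_nonneg_iff.mpr (by linarith)
  have hshch : Real.sinh (s/2) < Real.cosh (s/2) := Real.sinh_lt_cosh _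
  set t := Real.tan (θ/4) with ht
  set u := Real.tanh (s/2) with hu
  have ht0 : 0 < t := Real.tan_pos_of_pos_of_lt_pi_div_two (by linarith) (by nlinarith)
  have ht1 : t ≤ 1 := by
    rw [ht, ← Real.tan_pi_div_four]
    apply Real.strictMonoOn_tan.monotoneOn
    · constructor <;> nlinarith
    · constructor <;> linarith
    · linarith
  have hu0 : 0 ≤ u := by
    rw [hu, Real.tanh_eq_sinh_div_cosh]
    positivity
  have hu1 : u < 1 := by
    rw [hu, Real.tanh_eq_sinh_div_cosh, div_lt_one hch]
    exact hshch
  have hT0 : 0 ≤ t * u := by positivity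
  have hT1 : t * u < 1 := by nlinarith
  -- rewrite half/quarter angles
  have hθ2 : θ / 2 = 2 * (θ / 4) := by ring
  have hs2 : s = 2 * (s / 2) := by ring
  have htt : t = Real.sin (θ/4) / Real.cos (θ/4) := Real.tan_eq_sin_div_cos _
  have huu : u = Real.sinh (s/2) / Real.cosh (s/2) := Real.tanh_eq_sinh_div_cosh _
  have hsinsq : Real.sin (θ/4) ^ 2 = 1 - Real.cos (θ/4) ^ 2 := Real.sin_sq _
  have hsinhsq : Real.sinh (s/2) ^ 2 = Real.cosh (s/2) ^ 2 - 1 := Real.sinh_sq _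
  have hden : 1 + Real.cos (θ/2) * Real.cosh s
      = 2 * Real.cos (θ/4) ^ 2 * Real.cosh (s/2) ^ 2 * (1 - (t*u)^2) := by
    rw [hθ2, hs2, Real.cos_two_mul, Real.cosh_two_mul, htt, huu]
    field_simp
    linear_combination (2*Real.sinh (s/2)^2) * hsinsq + hsinhsq
  have hnum : Real.sin (θ/2) * Real.sinh s
      = 2 * Real.cos (θ/4) ^ 2 * Real.cosh (s/2) ^ 2 * (2 * (t*u)) := by
    rw [hθ2, hs2, Real.sin_two_mul, Real.sinh_two_mul, htt, huu]
    field_simp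
  have hkey : Real.tan w = 2 * (t*u) / (1 - (t*u)^2) := by
    rw [htan, hnum, hden, mul_div_mul_left]
    positivity
  -- w = 2 * arctan (t*u)
  have harct : Real.arctan (t*u) < π/4 := by
    calc Real.arctan (t*u) < Real.arctan 1 := Real.arctan_strictMono hT1
    _ = π/4 := Real.arctan_one
  have harct0 : 0 ≤ Real.arctan (t*u) := by rw [← Real.arctan_zero]; exact Real.arctan_strictMono.monotone hT0
  have htan2 : Real.tan (2 * Real.arctan (t*u)) = Real.tan w := by
    rw [Real.tan_two_mul, Real.tan_arctan, hkey]
  have hweq : 2 * Real.arctan (t*u) = w := by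
    apply Real.injOn_tan _ _ htan2
    · constructor <;> linarith
    · constructor <;> linarith
  have : w / 2 = Real.arctan (t*u) := by linarith
  rw [this, Real.tan_arctan]
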